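/- arXiv:1404.1059 — 6 statements merged into one kernel-verified Lean document; each statement's English description precedes it below -/
import Mathlib

section
/- Let a set of jobs I be assigned to a machine of speed v > 0 and run consecutively (in any order, without idle time, starting at time 0 or later). Let Φ be the total size of jobs in I and φ the minimum density (weight divided by size) of any job in I. Then the sum over jobs j in I of w_j · (C_j − p_j/(2v)), where C_j is the completion time of j and p_j its size, is at least φ·Φ²/(2v). -/
open Finset

lemma key_pair (n : ℕ) (q : Fin n → ℝ) :
    2 * ∑ i, q i * ∑ m ∈ univ.filter (fun m => m ≤ i), q m
      = (∑ i, q i) ^ 2 + ∑ i, (q i) ^ 2 := by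
  have hA : ∑ i, q i * ∑ m ∈ univ.filter (fun m => m ≤ i), q m
      = ∑ i, ∑ m, q i * q m * (if m ≤ i then (1:ℝ) else 0) := by
    refine Finset.sum_congr rfl fun i _ => ?_
    rw [Finset.mul_sum, Finset.sum_filter]
    refine Finset.sum_congr rfl fun m _ => ?_
    by_cases h : m ≤ i <;> simp [h]
  have hB : ∑ i, q i * ∑ m ∈ univ.filter (fun m => m ≤ i), q m
      = ∑ i, ∑ m, q i * q m * (if i ≤ m then (1:ℝ) else 0) := by
    rw [hA, Finset.sum_comm]
    refine Finset.sum_congr rfl fun i _ => Finset.sum_congr rfl fun m _ => ?_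
    ring
  calc 2 * ∑ i, q i * ∑ m ∈ univ.filter (fun m => m ≤ i), q m
      = (∑ i, ∑ m, q i * q m * (if m ≤ i then (1:ℝ) else 0))
        + ∑ i, ∑ m, q i * q m * (if i ≤ m then (1:ℝ) else 0) := by
        rw [← hA, ← hB]; ring
    _ = ∑ i, ∑ m, q i * q m * ((if m ≤ i then (1:ℝ) else 0) + (if i ≤ m then 1 else 0)) := by
        rw [← Finset.sum_add_distrib]
        refine Finset.sum_congr rfl fun i _ => ?_
        rw [← Finset.sum_add_distrib]
        exact Finset.sum_congr rfl fun m _ => by ring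
    _ = ∑ i, ∑ m, (q i * q m + q i * q m * (if i = m then (1:ℝ) else 0)) := by
        refine Finset.sum_congr rfl fun i _ => Finset.sum_congr rfl fun m _ => ?_
        have : ((if m ≤ i then (1:ℝ) else 0) + (if i ≤ m then 1 else 0))
            = 1 + (if i = m then 1 else 0) := by
          rcases lt_trichotomy i m with h | h | h
          · simp [h.le, not_le.2 h, h.ne]
          · simp [h]
          · simp [h.le, not_le.2 h, h.ne']
        rw [this]; ring
    _ = (∑ i, q i) ^ 2 + ∑ i, (q i) ^ 2 := by
        simp only [Finset.sum_add_distrib]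
        congr 1
        · rw [sq, Finset.sum_mul_sum]
        · refine Finset.sum_congr rfl fun i _ => ?_
          simp [mul_ite, mul_zero, mul_one, sq]

/-- jobs of a set run consecutively (in some order `π`) on a machine of
speed `v`, starting at time `t0 ≥ 0`.  If every job has density at least `φ`, then the
sum of the `Γ`-values `w j * (C j - p j / (2 v))` is at least `φ Φ² / (2 v)` where
`Φ` is the total size. -/
theorem sum_gamma_lower_bound (n : ℕ) (p w : Fin n → ℝ) (v φ t0 : ℝ)
    (π : Equiv.Perm (Fin n))
    (hv : 0 < v) (hφ : 0 < φ) (ht0 : 0 ≤ t0)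
    (hp : ∀ j, 0 < p j) (hw : ∀ j, φ * p j ≤ w j) :
    φ * (∑ j, p j) ^ 2 / (2 * v) ≤
      ∑ j, w j *
        ((t0 + (∑ k ∈ univ.filter (fun k => π k ≤ π j), p k) / v) - p j / (2 * v)) := by
  set S : Fin n → ℝ := fun j => ∑ k ∈ univ.filter (fun k => π k ≤ π j), p k with hS
  set q : Fin n → ℝ := fun i => p (π.symm i) with hq
  have hSp : ∀ j, p j ≤ S j := by
    intro j
    refine Finset.single_le_sum (f := p) (fun k _ => (hp k).le) ?_
    simp
  have hterm : ∀ j, 0 ≤ (t0 + S j / v) - p j / (2 * v) := by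
    intro j
    have h1 : p j / (2 * v) ≤ S j / v := by
      rw [div_le_div_iff₀ (by positivity) hv]
      nlinarith [hSp j, (hp j).le, hv.le]
    linarith
  have step1 : ∑ j, φ * p j * ((t0 + S j / v) - p j / (2 * v))
      ≤ ∑ j, w j * ((t0 + S j / v) - p j / (2 * v)) :=
    Finset.sum_le_sum fun j _ => mul_le_mul_of_nonneg_right (hw j) (hterm j)
  have hinner : ∀ i : Fin n, (∑ k ∈ univ.filter (fun k => π k ≤ i), p k)
      = ∑ m ∈ univ.filter (fun m => m ≤ i), q m := by
    intro i
    rw [Finset.sum_filter, Finset.sum_filter]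
    exact Fintype.sum_equiv π _ _ (fun k => by simp [hq])
  have hreindex : ∑ j, p j * S j
      = ∑ i, q i * ∑ m ∈ univ.filter (fun m => m ≤ i), q m := by
    rw [← Equiv.sum_comp π (fun i => q i * ∑ m ∈ univ.filter (fun m => m ≤ i), q m)]
    refine Finset.sum_congr rfl fun j _ => ?_
    rw [← hinner (π j)]
    simp [hq, hS]
  have hq1 : ∑ i, q i = ∑ j, p j := Equiv.sum_comp π.symm p
  have hq2 : ∑ i, (q i) ^ 2 = ∑ j, (p j) ^ 2 :=
    Equiv.sum_comp π.symm (fun j => (p j) ^ 2)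
  have hsum : ∑ j, p j * S j = ((∑ j, p j) ^ 2 + ∑ j, (p j) ^ 2) / 2 := by
    have hk := key_pair n q
    rw [hq1, hq2] at hk
    rw [hreindex]; linarith
  have expand : ∑ j, φ * p j * ((t0 + S j / v) - p j / (2 * v))
      = φ * t0 * (∑ j, p j) + (φ / v) * ∑ j, p j * S j
        - (φ / (2 * v)) * ∑ j, (p j) ^ 2 := by
    have h : ∀ j, φ * p j * ((t0 + S j / v) - p j / (2 * v))
        = φ * t0 * p j + (φ / v) * (p j * S j) - (φ / (2 * v)) * (p j) ^ 2 := by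
      intro j; field_simp
    rw [Finset.sum_congr rfl (fun j _ => h j), Finset.sum_sub_distrib,
      Finset.sum_add_distrib, ← Finset.mul_sum, ← Finset.mul_sum, ← Finset.mul_sum]
  have hPsum : 0 ≤ ∑ j, p j := Finset.sum_nonneg fun j _ => (hp j).le
  have hmain : φ * (∑ j, p j) ^ 2 / (2 * v)
      ≤ ∑ j, φ * p j * ((t0 + S j / v) - p j / (2 * v)) := by
    rw [expand, hsum]
    have h0 : 0 ≤ φ * t0 * ∑ j, p j := by positivity
    have : (φ / v) * (((∑ j, p j) ^ 2 + ∑ j, (p j) ^ 2) / 2)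
        - (φ / (2 * v)) * ∑ j, (p j) ^ 2 = φ * (∑ j, p j) ^ 2 / (2 * v) := by
      field_simp; ring
    linarith
  exact hmain.trans step1
end

section
/- Let I be a set of jobs, all of common density Δ > 0, scheduled to run consecutively on a machine of speed s starting at time τ ≥ 0. Then the sum over jobs j in I of Γ_j = w_j·(C_j − p_j/(2s)) equals Δ · (τ + (Σ_{j∈I} p_j)/(2s)) · (Σ_{j∈I} p_j), independently of the ordering of the jobs within the block. -/
open Finset

lemma key_sym (n : ℕ) (π : Equiv.Perm (Fin n)) (f : Fin n → ℝ) :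
    ∑ j, f j * ∑ k ∈ univ.filter (fun k => π k ≤ π j), f k =
      ((∑ j, f j) ^ 2 + ∑ j, (f j) ^ 2) / 2 := by
  have h : (∑ j, f j * ∑ k ∈ univ.filter (fun k => π k ≤ π j), f k) +
      (∑ j, f j * ∑ k ∈ univ.filter (fun k => π k ≤ π j), f k) =
      (∑ j, f j) ^ 2 + ∑ j, (f j) ^ 2 := by
    have h1 : ∀ j : Fin n, f j * ∑ k ∈ univ.filter (fun k => π k ≤ π j), f k =
        ∑ k, if π k ≤ π j then f j * f k else 0 := by
      intro j
      simp [Finset.sum_filter, Finset.mul_sum, mul_ite]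
    simp only [h1]
    rw [Finset.sum_comm (s := univ) (t := univ)
      (f := fun j k => if π k ≤ π j then f j * f k else 0)]
    nth_rewrite 1 [Finset.sum_comm]
    rw [← Finset.sum_add_distrib]
    have h2 : ∀ j : Fin n, ((∑ i, if π i ≤ π j then f j * f i else 0) +
        ∑ i, if π j ≤ π i then f i * f j else 0) =
        (∑ i, f j * f i) + f j * f j := by
      intro j
      rw [← Finset.sum_add_distrib]
      have : ∀ i : Fin n, ((if π i ≤ π j then f j * f i else 0) +
          if π j ≤ π i then f i * f j else 0) =
          f j * f i + if i = j then f j * f i else 0 := by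
        intro i
        rcases lt_trichotomy (π i) (π j) with hlt | heq | hgt
        · have hij : i ≠ j := fun h => by simp [h] at hlt
          simp [hlt.le, not_le.mpr hlt, hij]
        · have hij : i = j := π.injective heq
          simp [hij]
        · have hij : i ≠ j := fun h => by simp [h] at hgt
          simp [hgt.le, not_le.mpr hgt, hij, mul_comm]
      simp only [this]
      rw [Finset.sum_add_distrib, Finset.sum_ite_eq' univ j (fun i => f j * f i)]
      simp
    simp only [h2]
    rw [Finset.sum_add_distrib]
    congr 1
    · rw [sq, Finset.sum_mul_sum]
    · exact Finset.sum_congr rfl fun j _ => (sq (f j)).symm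
  linarith

/-- a block of jobs of common density `Δ` running consecutively (in an
arbitrary order `π`) on a machine of speed `s` starting at time `τ ≥ 0` has total
`Γ`-value `Δ (τ + Σp/(2s)) Σp`, independently of the ordering. -/
theorem sum_gamma_equal_density (n : ℕ) (p : Fin n → ℝ) (Δ s τ : ℝ)
    (π : Equiv.Perm (Fin n))
    (hs : 0 < s) (hΔ : 0 < Δ) (hτ : 0 ≤ τ) (hp : ∀ j, 0 < p j) :
    ∑ j, (Δ * p j) *
        ((τ + (∑ k ∈ univ.filter (fun k => π k ≤ π j), p k) / s) - p j / (2 * s)) =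
      Δ * (τ + (∑ j, p j) / (2 * s)) * (∑ j, p j) := by
  have key := key_sym n π p
  have hs' : s ≠ 0 := ne_of_gt hs
  have expand : ∀ j : Fin n, (Δ * p j) *
      ((τ + (∑ k ∈ univ.filter (fun k => π k ≤ π j), p k) / s) - p j / (2 * s)) =
      Δ * τ * p j + (Δ / s) * (p j * ∑ k ∈ univ.filter (fun k => π k ≤ π j), p k)
        - (Δ / (2 * s)) * (p j) ^ 2 := by
    intro j
    field_simp
  simp only [expand]
  rw [Finset.sum_sub_distrib, Finset.sum_add_distrib, ← Finset.mul_sum, ← Finset.mul_sum,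
    ← Finset.mul_sum, key]
  field_simp
  ring
end

section
/- Let OPT and OPT' denote the optimal total weighted completion times for instances A and its rounded instance A' (sizes and weights rounded up, speeds rounded down to powers of 1+δ). Then OPT(A) ≤ OPT'(A') ≤ (1+δ)³·OPT(A). -/
open Finset

/-- size/weight rounded up to the nearest integer power of `1+δ`. -/
noncomputable def rUp (δ x : ℝ) : ℝ := (1 + δ) ^ (⌈Real.logb (1 + δ) x⌉)

/-- speed rounded down to the nearest integer power of `1+δ`. -/
noncomputable def rDown (δ x : ℝ) : ℝ := (1 + δ) ^ (⌊Real.logb (1 + δ) x⌋)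

/-- total weighted completion time of the schedule given by assignment `M` and
per-machine processing order `π` (consecutive processing from time `0`). -/
noncomputable def cost {n m : ℕ} (sz wt : Fin n → ℝ) (sp : Fin m → ℝ)
    (M : Fin n → Fin m) (π : Equiv.Perm (Fin n)) : ℝ :=
  ∑ j, wt j *
    ((∑ k ∈ univ.filter (fun k => M k = M j ∧ π k ≤ π j), sz k) / sp (M j))

/-- optimal cost: infimum over all assignments and per-machine orderings. -/
noncomputable def OPTcost (n m : ℕ) (sz wt : Fin n → ℝ) (sp : Fin m → ℝ) : ℝ :=
  ⨅ Mπ : (Fin n → Fin m) × Equiv.Perm (Fin n), cost sz wt sp Mπ.1 Mπ.2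

lemma rUp_pos {δ x : ℝ} (hδ : 0 < δ) : 0 < rUp δ x :=
  zpow_pos (by linarith) _

lemma rDown_pos {δ x : ℝ} (hδ : 0 < δ) : 0 < rDown δ x :=
  zpow_pos (by linarith) _

lemma le_rUp {δ x : ℝ} (hδ : 0 < δ) (hx : 0 < x) : x ≤ rUp δ x := by
  have hb : (1 : ℝ) < 1 + δ := by linarith
  calc x = (1 + δ) ^ Real.logb (1 + δ) x := (Real.rpow_logb (by linarith) hb.ne' hx).symm
    _ ≤ (1 + δ) ^ ((⌈Real.logb (1 + δ) x⌉ : ℝ)) :=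
        (Real.rpow_le_rpow_left_iff hb).mpr (Int.le_ceil _)
    _ = rUp δ x := Real.rpow_intCast _ _

lemma rUp_le {δ x : ℝ} (hδ : 0 < δ) (hx : 0 < x) : rUp δ x ≤ (1 + δ) * x := by
  have hb : (1 : ℝ) < 1 + δ := by linarith
  calc rUp δ x = (1 + δ) ^ ((⌈Real.logb (1 + δ) x⌉ : ℝ)) := (Real.rpow_intCast _ _).symm
    _ ≤ (1 + δ) ^ (Real.logb (1 + δ) x + 1) := by
        refine (Real.rpow_le_rpow_left_iff hb).mpr ?_
        exact le_of_lt (Int.ceil_lt_add_one _)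
    _ = (1 + δ) ^ Real.logb (1 + δ) x * (1 + δ) ^ (1 : ℝ) :=
        Real.rpow_add (by linarith) _ _
    _ = (1 + δ) * x := by
        rw [Real.rpow_logb (by linarith) hb.ne' hx, Real.rpow_one]; ring

lemma rDown_le {δ x : ℝ} (hδ : 0 < δ) (hx : 0 < x) : rDown δ x ≤ x := by
  have hb : (1 : ℝ) < 1 + δ := by linarith
  calc rDown δ x = (1 + δ) ^ ((⌊Real.logb (1 + δ) x⌋ : ℝ)) := (Real.rpow_intCast _ _).symm
    _ ≤ (1 + δ) ^ Real.logb (1 + δ) x :=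
        (Real.rpow_le_rpow_left_iff hb).mpr (Int.floor_le _)
    _ = x := Real.rpow_logb (by linarith) hb.ne' hx

lemma div_le_rDown {δ x : ℝ} (hδ : 0 < δ) (hx : 0 < x) : x / (1 + δ) ≤ rDown δ x := by
  have hb : (1 : ℝ) < 1 + δ := by linarith
  have h : x / (1 + δ) = (1 + δ) ^ (Real.logb (1 + δ) x - 1) := by
    rw [Real.rpow_sub (by linarith), Real.rpow_logb (by linarith) hb.ne' hx, Real.rpow_one]
  rw [h]
  calc (1 + δ) ^ (Real.logb (1 + δ) x - 1)
      ≤ (1 + δ) ^ ((⌊Real.logb (1 + δ) x⌋ : ℝ)) := by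
        refine (Real.rpow_le_rpow_left_iff hb).mpr ?_
        have := Int.lt_floor_add_one (Real.logb (1 + δ) x)
        linarith
    _ = rDown δ x := Real.rpow_intCast _ _

lemma cost_nonneg {n m : ℕ} {sz wt : Fin n → ℝ} {sp : Fin m → ℝ}
    (hsz : ∀ j, 0 ≤ sz j) (hwt : ∀ j, 0 ≤ wt j) (hsp : ∀ i, 0 ≤ sp i)
    (M : Fin n → Fin m) (π : Equiv.Perm (Fin n)) : 0 ≤ cost sz wt sp M π := by
  refine Finset.sum_nonneg fun j _ => mul_nonneg (hwt j) (div_nonneg ?_ (hsp _))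
  exact Finset.sum_nonneg fun k _ => hsz k

lemma cost_le_cost {n m : ℕ} {sz wt sz' wt' : Fin n → ℝ} {sp sp' : Fin m → ℝ}
    (hsz : ∀ j, sz j ≤ sz' j) (hsz0 : ∀ j, 0 ≤ sz j)
    (hwt : ∀ j, wt j ≤ wt' j) (hwt0 : ∀ j, 0 ≤ wt j) (hwt'0 : ∀ j, 0 ≤ wt' j)
    (hsp : ∀ i, sp' i ≤ sp i) (hsp' : ∀ i, 0 < sp' i)
    (M : Fin n → Fin m) (π : Equiv.Perm (Fin n)) :
    cost sz wt sp M π ≤ cost sz' wt' sp' M π := by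
  refine Finset.sum_le_sum fun j _ => ?_
  have hS0 : 0 ≤ ∑ k ∈ univ.filter (fun k => M k = M j ∧ π k ≤ π j), sz k :=
    Finset.sum_nonneg fun k _ => hsz0 k
  have hS : (∑ k ∈ univ.filter (fun k => M k = M j ∧ π k ≤ π j), sz k)
      ≤ ∑ k ∈ univ.filter (fun k => M k = M j ∧ π k ≤ π j), sz' k :=
    Finset.sum_le_sum fun k _ => hsz k
  have h1 : wt j * (∑ k ∈ univ.filter (fun k => M k = M j ∧ π k ≤ π j), sz k)
      ≤ wt' j * ∑ k ∈ univ.filter (fun k => M k = M j ∧ π k ≤ π j), sz' k :=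
    mul_le_mul (hwt j) hS hS0 (hwt'0 j)
  rw [mul_div_assoc', mul_div_assoc']
  exact div_le_div₀ (mul_nonneg (hwt'0 j) (hS0.trans hS)) h1 (hsp' _) (hsp _)

/-- scaling: multiplying sizes and weights by `c` and dividing speeds by `c`
multiplies the cost by `c ^ 3`. -/
lemma cost_scale {n m : ℕ} (sz wt : Fin n → ℝ) (sp : Fin m → ℝ) (c : ℝ) (hc : c ≠ 0)
    (hsp : ∀ i, sp i ≠ 0) (M : Fin n → Fin m) (π : Equiv.Perm (Fin n)) :
    cost (fun j => c * sz j) (fun j => c * wt j) (fun i => sp i / c) M π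
      = c ^ 3 * cost sz wt sp M π := by
  unfold cost
  rw [Finset.mul_sum]
  refine Finset.sum_congr rfl fun j _ => ?_
  rw [← Finset.mul_sum]
  field_simp

/-- `OPT(A) ≤ OPT'(A') ≤ (1+δ)³ OPT(A)` for the rounded instance. -/
theorem opt_rounding (n m : ℕ) (hm : 0 < m) (δ : ℝ) (hδ0 : 0 < δ) (hδ8 : δ ≤ 1 / 8)
    (a ω : Fin n → ℝ) (v : Fin m → ℝ)
    (ha : ∀ j, 0 < a j) (hω : ∀ j, 0 < ω j) (hv : ∀ i, 0 < v i) :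
    OPTcost n m a ω v ≤
        OPTcost n m (fun j => rUp δ (a j)) (fun j => rUp δ (ω j)) (fun i => rDown δ (v i)) ∧
      OPTcost n m (fun j => rUp δ (a j)) (fun j => rUp δ (ω j)) (fun i => rDown δ (v i)) ≤
        (1 + δ) ^ 3 * OPTcost n m a ω v := by
  haveI : NeZero m := ⟨hm.ne'⟩
  have hb : (0 : ℝ) < 1 + δ := by linarith
  -- pointwise comparisons
  have hpt1 : ∀ (M : Fin n → Fin m) (π : Equiv.Perm (Fin n)),
      cost a ω v M π ≤ cost (fun j => rUp δ (a j)) (fun j => rUp δ (ω j))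
        (fun i => rDown δ (v i)) M π := fun M π =>
    cost_le_cost (fun j => le_rUp hδ0 (ha j)) (fun j => (ha j).le)
      (fun j => le_rUp hδ0 (hω j)) (fun j => (hω j).le) (fun j => (rUp_pos hδ0).le)
      (fun i => rDown_le hδ0 (hv i)) (fun i => rDown_pos hδ0) M π
  have hpt2 : ∀ (M : Fin n → Fin m) (π : Equiv.Perm (Fin n)),
      cost (fun j => rUp δ (a j)) (fun j => rUp δ (ω j)) (fun i => rDown δ (v i)) M π
        ≤ (1 + δ) ^ 3 * cost a ω v M π := by
    intro M π
    have step : cost (fun j => rUp δ (a j)) (fun j => rUp δ (ω j))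
        (fun i => rDown δ (v i)) M π
        ≤ cost (fun j => (1 + δ) * a j) (fun j => (1 + δ) * ω j)
          (fun i => v i / (1 + δ)) M π :=
      cost_le_cost (fun j => rUp_le hδ0 (ha j)) (fun j => (rUp_pos hδ0).le)
        (fun j => rUp_le hδ0 (hω j)) (fun j => (rUp_pos hδ0).le)
        (fun j => mul_nonneg hb.le (hω j).le) (fun i => div_le_rDown hδ0 (hv i))
        (fun i => div_pos (hv i) hb) M π
    calc _ ≤ _ := step
      _ = (1 + δ) ^ 3 * cost a ω v M π :=
        cost_scale a ω v (1 + δ) hb.ne' (fun i => (hv i).ne') M π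
  -- boundedness below of the cost ranges
  have hbdd : BddBelow (Set.range fun Mπ : (Fin n → Fin m) × Equiv.Perm (Fin n) =>
      cost a ω v Mπ.1 Mπ.2) := by
    refine ⟨0, ?_⟩
    rintro x ⟨Mπ, rfl⟩
    exact cost_nonneg (fun j => (ha j).le) (fun j => (hω j).le) (fun i => (hv i).le) _ _
  have hbdd' : BddBelow (Set.range fun Mπ : (Fin n → Fin m) × Equiv.Perm (Fin n) =>
      cost (fun j => rUp δ (a j)) (fun j => rUp δ (ω j)) (fun i => rDown δ (v i))
        Mπ.1 Mπ.2) := by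
    refine ⟨0, ?_⟩
    rintro x ⟨Mπ, rfl⟩
    exact cost_nonneg (fun j => (rUp_pos hδ0).le) (fun j => (rUp_pos hδ0).le)
      (fun i => (rDown_pos hδ0).le) _ _
  constructor
  · refine le_ciInf fun Mπ => ?_
    exact le_trans (ciInf_le hbdd Mπ) (hpt1 Mπ.1 Mπ.2)
  · have hc : (0 : ℝ) < (1 + δ) ^ 3 := by positivity
    rw [← div_le_iff₀' hc]
    refine le_ciInf fun Mπ => ?_
    rw [div_le_iff₀' hc]
    exact le_trans (ciInf_le hbdd' Mπ) (hpt2 Mπ.1 Mπ.2)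
end

section
/- Fix δ with 0 < δ ≤ 1/8 and define the division of a job of size (1+δ)^i as follows: let k_i be the integer with 2^{k_i}·(1+δ)^i ∈ (1,2], and k'_i = ⌈log_{1+δ} 2^{k_i}⌉ + i. Then 1 ≤ k'_i ≤ Δ where Δ = ⌈log_{1+δ} 2⌉, and the pseudo-size π_i = (1+δ)^{k'_i}/2^{k_i} satisfies (1+δ)^i ≤ π_i < (1+δ)^{i+1}. Moreover, any two distinct pseudo-sizes of the same division k' differ by a multiplicative factor that is an integer power of 2 (the larger divides the smaller into a power of 2), i.e., pseudo-sizes within a division form a divisible sequence. -/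
/-- divisions and pseudo-sizes.  For a job size `(1+δ)^i`, with `k` the
integer such that `2^k (1+δ)^i ∈ (1,2]`, the division `k' = ⌈log_{1+δ} 2^k⌉ + i`
satisfies `1 ≤ k' ≤ Δ = ⌈log_{1+δ} 2⌉`, the pseudo-size `π_i = (1+δ)^{k'}/2^k`
satisfies `(1+δ)^i ≤ π_i < (1+δ)^{i+1}`, and any two pseudo-sizes of a common
division differ by a multiplicative factor that is an integer power of `2`. -/
theorem division_pseudo_size (δ : ℝ) (hδ0 : 0 < δ) (hδ8 : δ ≤ 1 / 8)
    (i k : ℤ) (hk1 : 1 < (2 : ℝ) ^ k * (1 + δ) ^ i) (hk2 : (2 : ℝ) ^ k * (1 + δ) ^ i ≤ 2)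
    (j l : ℤ) (hl1 : 1 < (2 : ℝ) ^ l * (1 + δ) ^ j) (hl2 : (2 : ℝ) ^ l * (1 + δ) ^ j ≤ 2)
    (hsame : ⌈Real.logb (1 + δ) ((2 : ℝ) ^ k)⌉ + i = ⌈Real.logb (1 + δ) ((2 : ℝ) ^ l)⌉ + j) :
    (1 ≤ ⌈Real.logb (1 + δ) ((2 : ℝ) ^ k)⌉ + i) ∧
    (⌈Real.logb (1 + δ) ((2 : ℝ) ^ k)⌉ + i ≤ ⌈Real.logb (1 + δ) 2⌉) ∧
    ((1 + δ) ^ i ≤ (1 + δ) ^ (⌈Real.logb (1 + δ) ((2 : ℝ) ^ k)⌉ + i) / (2 : ℝ) ^ k) ∧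
    ((1 + δ) ^ (⌈Real.logb (1 + δ) ((2 : ℝ) ^ k)⌉ + i) / (2 : ℝ) ^ k < (1 + δ) ^ (i + 1)) ∧
    (∃ c : ℤ, (1 + δ) ^ (⌈Real.logb (1 + δ) ((2 : ℝ) ^ k)⌉ + i) / (2 : ℝ) ^ k =
      (2 : ℝ) ^ c * ((1 + δ) ^ (⌈Real.logb (1 + δ) ((2 : ℝ) ^ l)⌉ + j) / (2 : ℝ) ^ l)) := by
  have hb1 : (1 : ℝ) < 1 + δ := by linarith
  have hb0 : (0 : ℝ) < 1 + δ := by linarith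
  have hbne : (1 + δ : ℝ) ≠ 1 := by linarith
  set b : ℝ := 1 + δ with hbdef
  have hlogb : 0 < Real.log b := Real.log_pos hb1
  set L : ℝ := Real.logb b 2 with hL
  have hLpos : 0 < L := Real.logb_pos hb1 one_lt_two
  -- logb b (2^k) = k * L
  have hlogbk : Real.logb b ((2 : ℝ) ^ k) = (k : ℝ) * L := by
    rw [hL, Real.logb, Real.logb, Real.log_zpow]; ring
  have hlogbl : Real.logb b ((2 : ℝ) ^ l) = (l : ℝ) * L := by
    rw [hL, Real.logb, Real.logb, Real.log_zpow]; ring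
  set K : ℤ := ⌈Real.logb b ((2 : ℝ) ^ k)⌉ with hKdef
  set K' : ℤ := ⌈Real.logb b ((2 : ℝ) ^ l)⌉ with hK'def
  have hKge : (k : ℝ) * L ≤ (K : ℝ) := by rw [hKdef, ← hlogbk]; exact Int.le_ceil _
  have hKlt : (K : ℝ) < (k : ℝ) * L + 1 := by
    rw [hKdef, ← hlogbk]; exact Int.ceil_lt_add_one _
  -- 2^k = b ^ (k*L) as rpow
  have h2rpow : ∀ m : ℤ, (2 : ℝ) ^ m = b ^ ((m : ℝ) * L) := by
    intro m
    rw [mul_comm, Real.rpow_mul hb0.le, Real.rpow_logb hb0 hbne (by norm_num),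
      Real.rpow_intCast]
  have hbz : ∀ m : ℤ, (b : ℝ) ^ m = b ^ ((m : ℝ) : ℝ) := fun m => (Real.rpow_intCast b m).symm
  have h2kpos : (0 : ℝ) < (2 : ℝ) ^ k := zpow_pos (by norm_num) k
  have h2lpos : (0 : ℝ) < (2 : ℝ) ^ l := zpow_pos (by norm_num) l
  -- hk1 in rpow form: 1 < b^(kL + i)
  have hk1' : (0 : ℝ) < (k : ℝ) * L + (i : ℝ) := by
    have : (1 : ℝ) < b ^ ((k : ℝ) * L + (i : ℝ)) := by
      rw [Real.rpow_add hb0, ← h2rpow, ← hbz]; exact hk1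
    exact (Real.one_lt_rpow_iff_of_pos hb0).mp this |>.elim (fun h => h.2) (fun h => absurd h.1 (by linarith))
  have hk2' : (k : ℝ) * L + (i : ℝ) ≤ L := by
    have h2 : b ^ ((k : ℝ) * L + (i : ℝ)) ≤ b ^ L := by
      rw [Real.rpow_add hb0, ← h2rpow, ← hbz]
      rw [hL, Real.rpow_logb hb0 hbne (by norm_num)]; exact hk2
    exact (Real.rpow_le_rpow_left_iff hb1).mp h2
  refine ⟨?_, ?_, ?_, ?_, ?_⟩
  · -- 1 ≤ K + i
    have : (-i : ℝ) < Real.logb b ((2:ℝ)^k) := by rw [hlogbk]; push_cast; linarith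
    have h2 : -i < K := Int.lt_ceil.mpr (by exact_mod_cast this)
    omega
  · -- K + i ≤ ⌈L⌉
    have h1 : ((K + i - 1 : ℤ) : ℝ) < L := by push_cast; linarith
    have := Int.lt_ceil.mpr h1
    omega
  · -- lower bound for pseudo-size
    rw [le_div_iff₀ h2kpos]
    have : (2 : ℝ) ^ k ≤ b ^ K := by
      rw [h2rpow, hbz]
      exact Real.rpow_le_rpow_left_iff hb1 |>.mpr hKge
    calc b ^ i * (2:ℝ) ^ k ≤ b ^ i * b ^ K := by
          apply mul_le_mul_of_nonneg_left this (zpow_pos hb0 i).le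
      _ = b ^ (K + i) := by rw [← zpow_add₀ (ne_of_gt hb0)]; ring_nf
  · -- upper bound
    rw [div_lt_iff₀ h2kpos]
    have hlt : b ^ K < b * (2 : ℝ) ^ k := by
      have : b ^ ((K : ℝ)) < b ^ ((k : ℝ) * L + 1) :=
        Real.rpow_lt_rpow_left_iff hb1 |>.mpr hKlt
      rw [Real.rpow_add hb0, ← h2rpow, Real.rpow_one] at this
      rw [hbz]; linarith
    calc b ^ (K + i) = b ^ K * b ^ i := by rw [← zpow_add₀ (ne_of_gt hb0)]
      _ < (b * (2:ℝ)^k) * b ^ i := by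
          apply mul_lt_mul_of_pos_right hlt (zpow_pos hb0 i)
      _ = b ^ (i+1) * (2:ℝ)^k := by rw [zpow_add₀ (ne_of_gt hb0), zpow_one]; ring
  · -- divisibility: c = l - k
    refine ⟨l - k, ?_⟩
    rw [← hsame, zpow_sub₀ (by norm_num : (2:ℝ) ≠ 0)]
    field_simp
end

section
/- Suppose all jobs released at each time r have, on each machine of speed s_ℓ, total selected size per density at most (s_ℓ·δ·r)/δ^{23} = s_ℓ·r/δ^{22}. If the input contains at most ŷ densities, then all jobs of modified release date r can be scheduled (each machine processing its selected jobs consecutively) within a time window [t, t + r·ŷ/δ^{22}) for any t ≥ r. Moreover, all jobs of the ŷ densities with modified release date at most r can be scheduled within a window [t, t + r·ŷ·(1+δ)/δ^{23}) for any t > r. -/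
open Finset

lemma geom_finset_bound (δ : ℝ) (hδ : 0 < δ) (q₀ : ℤ) (T : Finset ℤ)
    (hT : ∀ q ∈ T, q ≤ q₀) :
    ∑ q ∈ T, (1 + δ : ℝ) ^ q ≤ (1 + δ : ℝ) ^ q₀ * ((1 + δ) / δ) := by
  have h1 : (1:ℝ) < 1 + δ := by linarith
  have h0 : (0:ℝ) < 1 + δ := by linarith
  set x : ℝ := (1 + δ)⁻¹ with hxdef
  have hx0 : 0 < x := inv_pos.2 h0
  have hx1 : x < 1 := inv_lt_one_of_one_lt₀ h1
  have inj : Set.InjOn (fun q : ℤ => (q₀ - q).toNat) T := by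
    intro a ha b hb hab
    have ha' := hT a ha; have hb' := hT b hb
    simp only at hab
    omega
  have step1 : ∑ q ∈ T, (1 + δ : ℝ) ^ q
      = (1 + δ) ^ q₀ * ∑ n ∈ T.image (fun q => (q₀ - q).toNat), x ^ n := by
    rw [Finset.sum_image inj, mul_sum]
    apply Finset.sum_congr rfl
    intro q hq
    have hq' := hT q hq
    have : ((q₀ - q).toNat : ℤ) = q₀ - q := Int.toNat_of_nonneg (by omega)
    rw [hxdef, ← zpow_natCast ((1+δ)⁻¹), this, inv_zpow, ← zpow_neg, neg_sub,
      ← zpow_add₀ (ne_of_gt h0)]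
    congr 1
    ring
  rw [step1]
  have hq0 : (0:ℝ) ≤ (1+δ)^q₀ := le_of_lt (zpow_pos h0 _)
  apply mul_le_mul_of_nonneg_left _ hq0
  calc ∑ n ∈ T.image (fun q => (q₀ - q).toNat), x ^ n
      ≤ ∑' n : ℕ, x ^ n := Summable.sum_le_tsum _ (fun n _ => by positivity)
        (summable_geometric_of_lt_one hx0.le hx1)
    _ = (1 - x)⁻¹ := tsum_geometric_of_lt_one hx0.le hx1
    _ = (1 + δ) / δ := by
        rw [hxdef]; field_simp; rw [add_sub_cancel_left, div_self hδ.ne']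

/-- with at most `yhat` densities, if the total selected size of jobs of
each density released at `r` on a machine of speed `s` is at most `s·r/δ²²`, then all
these jobs can be processed consecutively within the window `[t, t + r·yhat/δ²²)` for any
`t ≥ r`.  Moreover, the jobs of the `yhat` densities with (modified) release date at most
`r = (1+δ)^{q₀}` (release dates are powers of `1+δ`), each release date `(1+δ)^q`
contributing per density at most `s·(1+δ)^q/δ²²`, fit within
`[t', t' + r·yhat(1+δ)/δ²³)` for any `t' > r`. -/
theorem schedule_release_date_window (δ s r t : ℝ) (yhat : ℕ)
    (hδ : 0 < δ) (hs : 0 < s) (hr : 0 < r) (ht : r ≤ t)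
    (P : Fin yhat → ℝ) (hP0 : ∀ d, 0 ≤ P d) (hP : ∀ d, P d ≤ s * r / δ ^ 22)
    (q₀ : ℤ) (hrq : r = (1 + δ) ^ q₀)
    (T : Finset ℤ) (hT : ∀ q ∈ T, q ≤ q₀)
    (Q : Fin yhat → ℤ → ℝ) (hQ0 : ∀ d q, 0 ≤ Q d q)
    (hQ : ∀ d q, Q d q ≤ s * (1 + δ) ^ q / δ ^ 22) :
    (t + (∑ d, P d) / s ≤ t + r * yhat / δ ^ 22) ∧
      ∀ t' : ℝ, r < t' →
        t' + (∑ d, ∑ q ∈ T, Q d q) / s ≤ t' + r * yhat * (1 + δ) / δ ^ 23 := by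
  constructor
  · have h1 : ∑ d, P d ≤ (yhat : ℝ) * (s * r / δ ^ 22) := by
      calc ∑ d, P d ≤ ∑ _d : Fin yhat, s * r / δ ^ 22 := Finset.sum_le_sum fun d _ => hP d
        _ = (yhat : ℝ) * (s * r / δ ^ 22) := by simp [mul_comm]
    have : (∑ d, P d) / s ≤ r * yhat / δ ^ 22 := by
      rw [div_le_iff₀ hs]
      calc ∑ d, P d ≤ (yhat : ℝ) * (s * r / δ ^ 22) := h1
        _ = r * yhat / δ ^ 22 * s := by field_simp
    linarith
  · intro t' _
    have key : ∀ d : Fin yhat, ∑ q ∈ T, Q d q ≤ s * r * (1 + δ) / δ ^ 23 := by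
      intro d
      calc ∑ q ∈ T, Q d q ≤ ∑ q ∈ T, s * (1 + δ) ^ q / δ ^ 22 :=
            Finset.sum_le_sum fun q _ => hQ d q
        _ = (s / δ ^ 22) * ∑ q ∈ T, (1 + δ : ℝ) ^ q := by rw [Finset.mul_sum]; congr 1; ext q; ring
        _ ≤ (s / δ ^ 22) * ((1 + δ) ^ q₀ * ((1 + δ) / δ)) := by
            apply mul_le_mul_of_nonneg_left (geom_finset_bound δ hδ q₀ T hT)
            positivity
        _ = s * r * (1 + δ) / δ ^ 23 := by
            rw [hrq]; field_simp
    have h2 : ∑ d, ∑ q ∈ T, Q d q ≤ (yhat : ℝ) * (s * r * (1 + δ) / δ ^ 23) := by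
      calc ∑ d, ∑ q ∈ T, Q d q ≤ ∑ _d : Fin yhat, s * r * (1 + δ) / δ ^ 23 :=
            Finset.sum_le_sum fun d _ => key d
        _ = _ := by simp [mul_comm]
    have : (∑ d, ∑ q ∈ T, Q d q) / s ≤ r * yhat * (1 + δ) / δ ^ 23 := by
      rw [div_le_iff₀ hs]
      calc ∑ d, ∑ q ∈ T, Q d q ≤ (yhat : ℝ) * (s * r * (1 + δ) / δ ^ 23) := h2
        _ = r * yhat * (1 + δ) / δ ^ 23 * s := by field_simp
    linarith
end

section
/- Suppose for each i the schedule sol_k delays job set S_{i,ℓ} (ℓ ≥ 1) by an additive time at most Ψ/δ^{8ℓ}, the total size of S_{i,ℓ} is at most (1+δ)Ψ, every job of S_{i,ℓ} has density at most d_i/(1+δ)^{ŷℓ} where d_i is the minimum density in S_{i,0}, and the cost of S_{i,0} satisfies c_{i,0} ≥ (Ψ/5)·d_i·(Ψ/2). If ŷ ≥ 1/δ^{12} and 0 < δ ≤ 1/36, then the total extra cost Σ_{ℓ≥1} c_{i,ℓ} ≤ Σ_{ℓ≥1} (1+δ)Ψ·d_i·(1+δ)^{−ŷℓ}·Ψ·δ^{−8ℓ}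 is at most δ·c_{i,0}. -/
/-- delayed job sets `S_{i,ℓ}` (`ℓ ≥ 1`) with total size at most
`(1+δ)Ψ`, densities at most `d_i/(1+δ)^{yhatℓ}`, delayed by at most `Ψ/δ^{8ℓ}`, incur
total extra cost `Σ_{ℓ≥1} c_{i,ℓ} ≤ δ·c_{i,0}`, given `c_{i,0} ≥ (Ψ/5)d_i(Ψ/2)`,
`yhat ≥ 1/δ¹²` and `0 < δ ≤ 1/36`. -/
theorem delayed_sets_cost_bound (δ Ψ d c0 : ℝ) (yhat : ℕ) (c : ℕ → ℝ)
    (hδ0 : 0 < δ) (hδ : δ ≤ 1 / 36) (hyhat : 1 / δ ^ 12 ≤ (yhat : ℝ))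
    (hΨ : 0 < Ψ) (hd : 0 < d)
    (hc0 : Ψ / 5 * d * (Ψ / 2) ≤ c0)
    (hcnn : ∀ ℓ, 0 ≤ c ℓ)
    (hc : ∀ ℓ : ℕ, 1 ≤ ℓ →
      c ℓ ≤ (1 + δ) * Ψ * d * (1 / (1 + δ) ^ (yhat * ℓ)) * (Ψ / δ ^ (8 * ℓ))) :
    ∑' ℓ : ℕ, c (ℓ + 1) ≤ δ * c0 := by
  have h1δ : (0:ℝ) < 1 + δ := by linarith
  have hδne : δ ≠ 0 := ne_of_gt hδ0
  -- Bernoulli: (1+δ)^yhat ≥ 1 + yhat·δ ≥ yhat·δ ≥ 1/δ^11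
  have hbern : 1 + (yhat : ℝ) * δ ≤ (1+δ)^yhat := by
    have := one_add_mul_le_pow (by linarith : (-2:ℝ) ≤ δ) yhat
    linarith
  have hyd : 1/δ^11 ≤ (yhat : ℝ) * δ := by
    have h := mul_le_mul_of_nonneg_right hyhat hδ0.le
    have : 1/δ^12 * δ = 1/δ^11 := by field_simp
    linarith [this ▸ h]
  have hpow : 1/δ^11 ≤ (1+δ)^yhat := by linarith
  set A : ℝ := (1+δ)^yhat * δ^8 with hAdef
  have hApos : 0 < A := by positivity
  have hA : 1/δ^3 ≤ A := by
    have := mul_le_mul_of_nonneg_right hpow (by positivity : (0:ℝ) ≤ δ^8)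
    have he : 1/δ^11 * δ^8 = 1/δ^3 := by field_simp
    rw [he] at this; exact this
  set r : ℝ := 1 / A with hrdef
  have hr0 : 0 < r := by positivity
  have hrδ3 : r ≤ δ^3 := by
    rw [hrdef]
    have hδ3 : (0:ℝ) < 1/δ^3 := by positivity
    calc 1/A ≤ 1/(1/δ^3) := one_div_le_one_div_of_le hδ3 hA
    _ = δ^3 := by field_simp
  have hδ3lt : δ^3 < 1/2 := by nlinarith [pow_le_pow_left₀ hδ0.le hδ 3]
  have hr1 : r < 1 := by linarith
  set K : ℝ := (1+δ) * Ψ * d * Ψ with hKdef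
  have hK0 : 0 < K := by positivity
  have hbound : ∀ ℓ : ℕ, c (ℓ+1) ≤ K * r * r^ℓ := by
    intro ℓ
    have h := hc (ℓ+1) (Nat.le_add_left 1 ℓ)
    have heq : (1 + δ) * Ψ * d * (1 / (1 + δ) ^ (yhat * (ℓ+1))) * (Ψ / δ ^ (8 * (ℓ+1)))
        = K * r * r^ℓ := by
      rw [hKdef, hrdef, hAdef, pow_mul, pow_mul]
      rw [div_pow, one_pow, ← pow_mul]
      have h1 : ((1+δ):ℝ)^(yhat*(ℓ+1)) ≠ 0 := by positivity
      have h2 : (δ:ℝ)^(8*(ℓ+1)) ≠ 0 := by positivity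
      field_simp
      ring
    rw [heq] at h; exact h
  have hsumg : Summable (fun ℓ : ℕ => K * r * r^ℓ) :=
    (summable_geometric_of_lt_one hr0.le hr1).mul_left _
  have hsumc : Summable (fun ℓ : ℕ => c (ℓ+1)) :=
    Summable.of_nonneg_of_le (fun ℓ => hcnn (ℓ+1)) hbound hsumg
  have htsum : ∑' ℓ : ℕ, c (ℓ+1) ≤ ∑' ℓ : ℕ, K * r * r^ℓ :=
    Summable.tsum_le_tsum hbound hsumc hsumg
  have hgeo : ∑' ℓ : ℕ, K * r * r^ℓ = K * r * (1 - r)⁻¹ := by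
    rw [tsum_mul_left, tsum_geometric_of_lt_one hr0.le hr1]
  rw [hgeo] at htsum
  -- K * r / (1-r) ≤ K * δ²
  have h1r : 1 - δ^3 ≤ 1 - r := by linarith
  have h1r0 : (0:ℝ) < 1 - δ^3 := by linarith
  have hfrac : r * (1 - r)⁻¹ ≤ δ^2 := by
    have : r * (1 - r)⁻¹ ≤ δ^3 * (1 - δ^3)⁻¹ := by
      apply mul_le_mul hrδ3 _ (inv_nonneg.mpr (by linarith)) (by positivity)
      exact inv_anti₀ h1r0 h1r
    have h2 : δ^3 * (1 - δ^3)⁻¹ ≤ δ^2 := by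
      rw [mul_inv_le_iff₀ h1r0]
      nlinarith
    linarith
  have hfinal : K * r * (1 - r)⁻¹ ≤ δ * c0 := by
    have h1 : K * r * (1 - r)⁻¹ = K * (r * (1-r)⁻¹) := by ring
    have h2 : K * (r * (1-r)⁻¹) ≤ K * δ^2 :=
      mul_le_mul_of_nonneg_left hfrac hK0.le
    have h3 : K * δ^2 ≤ δ * c0 := by
      rw [hKdef]
      have hP : 0 < Ψ * d * Ψ := by positivity
      have hδδ : (1 + δ) * δ ≤ 1 / 10 := by nlinarith
      have h4 := mul_le_mul_of_nonneg_right hδδ (mul_pos hP hδ0).le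
      have h5 := mul_le_mul_of_nonneg_left hc0 hδ0.le
      have e1 : (1 + δ) * Ψ * d * Ψ * δ ^ 2 = (1 + δ) * δ * (Ψ * d * Ψ * δ) := by ring
      have e2 : 1 / 10 * (Ψ * d * Ψ * δ) = δ * (Ψ / 5 * d * (Ψ / 2)) := by ring
      linarith
    linarith
  linarith
end
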